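/- arXiv:1004.3964 — 2 statements merged into one kernel-verified Lean document; each statement's English description precedes it below -/
import Mathlib

section
/- The number of 312-avoiding double simsun permutations in S_n with exactly k descents equals the binomial coefficient C(n, 2k); the same holds for 231-avoiding double simsun permutations. -/
/-- A permutation `σ ∈ S_n` is *simsun* if for every `k`, the subword of `σ`
restricted to the `k` smallest values has no double descent, i.e. no three
consecutive (in that subword) decreasing elements. -/
def Simsun {n : ℕ} (σ : Equiv.Perm (Fin n)) : Prop :=
  ∀ k : ℕ, ¬ ∃ i j l : Fin n, i < j ∧ j < l ∧
    (σ i).val < k ∧ (σ j).val < k ∧ (σ l).val < k ∧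
    σ l < σ j ∧ σ j < σ i ∧
    (∀ m : Fin n, i < m → m < j → k ≤ (σ m).val) ∧
    (∀ m : Fin n, j < m → m < l → k ≤ (σ m).val)

def DoubleSimsun {n : ℕ} (σ : Equiv.Perm (Fin n)) : Prop :=
  Simsun σ ∧ Simsun σ⁻¹

def Avoids123 {n : ℕ} (σ : Equiv.Perm (Fin n)) : Prop :=
  ¬ ∃ i j k : Fin n, i < j ∧ j < k ∧ σ i < σ j ∧ σ j < σ k

def Avoids132 {n : ℕ} (σ : Equiv.Perm (Fin n)) : Prop :=
  ¬ ∃ i j k : Fin n, i < j ∧ j < k ∧ σ i < σ k ∧ σ k < σ j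

def Avoids213 {n : ℕ} (σ : Equiv.Perm (Fin n)) : Prop :=
  ¬ ∃ i j k : Fin n, i < j ∧ j < k ∧ σ j < σ i ∧ σ i < σ k

def Avoids231 {n : ℕ} (σ : Equiv.Perm (Fin n)) : Prop :=
  ¬ ∃ i j k : Fin n, i < j ∧ j < k ∧ σ k < σ i ∧ σ i < σ j

def Avoids312 {n : ℕ} (σ : Equiv.Perm (Fin n)) : Prop :=
  ¬ ∃ i j k : Fin n, i < j ∧ j < k ∧ σ j < σ k ∧ σ k < σ i

def Avoids321 {n : ℕ} (σ : Equiv.Perm (Fin n)) : Prop :=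
  ¬ ∃ i j k : Fin n, i < j ∧ j < k ∧ σ k < σ j ∧ σ j < σ i

/-- An occurrence of the pattern 4132 at positions `i1 < i2 < i3 < i4`. -/
def Pattern4132At {n : ℕ} (σ : Equiv.Perm (Fin n)) (i1 i2 i3 i4 : Fin n) : Prop :=
  i1 < i2 ∧ i2 < i3 ∧ i3 < i4 ∧ σ i2 < σ i4 ∧ σ i4 < σ i3 ∧ σ i3 < σ i1

/-- An occurrence of the pattern 51342 at positions `j1 < j2 < j3 < j4 < j5`. -/
def Pattern51342At {n : ℕ} (σ : Equiv.Perm (Fin n)) (j1 j2 j3 j4 j5 : Fin n) : Prop :=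
  j1 < j2 ∧ j2 < j3 ∧ j3 < j4 ∧ j4 < j5 ∧
  σ j2 < σ j5 ∧ σ j5 < σ j3 ∧ σ j3 < σ j4 ∧ σ j4 < σ j1

/-- `σ` has no occurrence of the pattern 4132. -/
def No4132 {n : ℕ} (σ : Equiv.Perm (Fin n)) : Prop :=
  ¬ ∃ i1 i2 i3 i4 : Fin n, Pattern4132At σ i1 i2 i3 i4

/-- Every occurrence of the pattern 4132 in `σ` is contained in an occurrence
of the pattern 51342 (its four indices are among the five indices). -/
def Every4132In51342 {n : ℕ} (σ : Equiv.Perm (Fin n)) : Prop :=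
  ∀ i1 i2 i3 i4 : Fin n, Pattern4132At σ i1 i2 i3 i4 →
    ∃ j1 j2 j3 j4 j5 : Fin n, Pattern51342At σ j1 j2 j3 j4 j5 ∧
      ({i1, i2, i3, i4} : Set (Fin n)) ⊆ ({j1, j2, j3, j4, j5} : Set (Fin n))

def Contains35142 {n : ℕ} (σ : Equiv.Perm (Fin n)) : Prop :=
  ∃ i1 i2 i3 i4 i5 : Fin n, i1 < i2 ∧ i2 < i3 ∧ i3 < i4 ∧ i4 < i5 ∧
    σ i3 < σ i5 ∧ σ i5 < σ i1 ∧ σ i1 < σ i4 ∧ σ i4 < σ i2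

def Contains42513 {n : ℕ} (σ : Equiv.Perm (Fin n)) : Prop :=
  ∃ i1 i2 i3 i4 i5 : Fin n, i1 < i2 ∧ i2 < i3 ∧ i3 < i4 ∧ i4 < i5 ∧
    σ i4 < σ i2 ∧ σ i2 < σ i5 ∧ σ i5 < σ i1 ∧ σ i1 < σ i3

/-- A Motzkin path encoded as a list of steps `1` (up), `-1` (down), `0` (level):
all prefix sums are nonnegative and the total sum is zero. -/
def MotzkinPath (p : List ℤ) : Prop :=
  (∀ s ∈ p, s = 1 ∨ s = -1 ∨ s = 0) ∧ (∀ t : List ℤ, t <+: p → 0 ≤ t.sum) ∧ p.sum = 0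

/-- The path has no two consecutive up steps. -/
def UUFree (p : List ℤ) : Prop := ¬ ([1, 1] : List ℤ) <:+: p

-- The number of descents of a permutation
open scoped Classical in
noncomputable def numDescents {n : ℕ} (σ : Equiv.Perm (Fin n)) : ℕ :=
  (Finset.univ.filter fun i : Fin n =>
    ∃ h : i.val + 1 < n, σ ⟨i.val + 1, h⟩ < σ i).card

/-- `τ_1 > τ_2 < τ_3 > τ_4 < ⋯` (indices are 0-based here). -/
def Alternating {m : ℕ} (τ : Equiv.Perm (Fin m)) : Prop :=
  ∀ i : Fin m, ∀ h : i.val + 1 < m,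
    if i.val % 2 = 0 then τ ⟨i.val + 1, h⟩ < τ i else τ i < τ ⟨i.val + 1, h⟩

theorem Equiv.Perm.apply_inv_self {α : Type*} (f : Equiv.Perm α) (x : α) : f (f⁻¹ x) = x :=
  f.apply_symm_apply x

theorem Equiv.Perm.inv_apply_self {α : Type*} (f : Equiv.Perm α) (x : α) : f⁻¹ (f x) = x :=
  f.symm_apply_apply x

namespace DS
variable {n : ℕ}

def Bnd (σ : Equiv.Perm (Fin n)) : Prop := ∀ i : Fin n, (σ i).val ≤ i.val + 1

theorem key {σ : Equiv.Perm (Fin n)} (hσ : Bnd σ) {i j : Fin n} (hji : j < i)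
    (hv : (σ i).val ≤ j.val) : (σ j).val = j.val + 1 := by
  have hjn : j.val + 1 < n := lt_of_le_of_lt (Nat.succ_le_of_lt hji) i.isLt
  classical
  set J : Fin n := ⟨j.val + 1, hjn⟩ with hJ
  set A : Finset (Fin n) := Finset.Iic j with hA
  set B : Finset (Fin n) := (Finset.Iic J).erase (σ i) with hB
  have hAcard : A.card = j.val + 1 := Fin.card_Iic j
  have hσiJ : σ i ∈ Finset.Iic J := by
    simp only [Finset.mem_Iic]
    rw [Fin.le_def]; simp [hJ]; omega
  have hBcard : B.card = j.val + 1 := by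
    rw [hB, Finset.card_erase_of_mem hσiJ, Fin.card_Iic]
    simp [hJ]
  have hsub : A.image σ ⊆ B := by
    intro x hx
    obtain ⟨m, hm, rfl⟩ := Finset.mem_image.1 hx
    rw [hA, Finset.mem_Iic, Fin.le_def] at hm
    rw [hB, Finset.mem_erase]
    constructor
    · intro h
      have := σ.injective h
      subst this
      exact absurd hm (by have := Fin.lt_def.1 hji; omega)
    · rw [Finset.mem_Iic, Fin.le_def]
      have := hσ m
      simp [hJ]; omega
  have himg : A.image σ = B := Finset.eq_of_subset_of_card_le hsub (by
    rw [hBcard, Finset.card_image_of_injective _ σ.injective, hAcard])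
  have hJB : J ∈ B := by
    rw [hB, Finset.mem_erase]
    refine ⟨fun h => ?_, Finset.mem_Iic.2 le_rfl⟩
    rw [← h] at hv; simp [hJ] at hv
  rw [← himg, Finset.mem_image] at hJB
  obtain ⟨m, hm, hmJ⟩ := hJB
  rw [hA, Finset.mem_Iic, Fin.le_def] at hm
  have h1 : (σ m).val = j.val + 1 := by rw [hmJ]
  have h2 : m.val = j.val := by have := hσ m; omega
  have : m = j := Fin.ext h2
  subst this; exact h1

theorem bnd_av312 {σ : Equiv.Perm (Fin n)} (hσ : Bnd σ) : Avoids312 σ := by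
  rintro ⟨i, j, l, hij, hjl, h1, h2⟩
  have hb := hσ i
  have hij' := Fin.lt_def.1 hij
  have hjl' := Fin.lt_def.1 hjl
  have h1' := Fin.lt_def.1 h1
  have h2' := Fin.lt_def.1 h2
  have hlj : (σ l).val ≤ j.val := by omega
  have := key hσ hjl hlj
  omega

theorem bnd_av321 {σ : Equiv.Perm (Fin n)} (hσ : Bnd σ) : Avoids321 σ := by
  rintro ⟨i, j, l, hij, hjl, h1, h2⟩
  have hb := hσ i
  have hij' := Fin.lt_def.1 hij
  have hjl' := Fin.lt_def.1 hjl
  have h1' := Fin.lt_def.1 h1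
  have h2' := Fin.lt_def.1 h2
  have hlj : (σ l).val ≤ j.val := by omega
  have := key hσ hjl hlj
  omega

theorem av321_simsun {σ : Equiv.Perm (Fin n)} (hσ : Avoids321 σ) : Simsun σ := by
  intro k ⟨i, j, l, hij, hjl, _, _, _, h1, h2, _, _⟩
  exact hσ ⟨i, j, l, hij, hjl, h1, h2⟩

theorem av321_inv {σ : Equiv.Perm (Fin n)} (hσ : Avoids321 σ) : Avoids321 σ⁻¹ := by
  rintro ⟨i, j, l, hij, hjl, h1, h2⟩
  refine hσ ⟨σ⁻¹ l, σ⁻¹ j, σ⁻¹ i, h1, h2, ?_, ?_⟩ <;>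
    simp [Equiv.Perm.apply_inv_self] <;> assumption


theorem av321_of {σ : Equiv.Perm (Fin n)} (h312 : Avoids312 σ) (hs : Simsun σ) :
    Avoids321 σ := by
  classical
  by_contra h
  rw [Avoids321, not_not] at h
  obtain ⟨a, b, c, hab, hbc, h1, h2⟩ := h
  set T : Finset (Fin n) :=
    Finset.univ.filter (fun i => ∃ j l, i < j ∧ j < l ∧ σ l < σ j ∧ σ j < σ i) with hT
  have hTne : T.Nonempty := ⟨a, by
    rw [hT, Finset.mem_filter]; exact ⟨Finset.mem_univ _, b, c, hab, hbc, h1, h2⟩⟩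
  obtain ⟨i₀, hi₀T, hi₀min⟩ := T.exists_min_image (fun i => (σ i).val) hTne
  rw [hT, Finset.mem_filter] at hi₀T
  obtain ⟨-, j₁, l₁, hij₁, hjl₁, hv₁, hv₂⟩ := hi₀T
  set J : Finset (Fin n) :=
    Finset.univ.filter (fun j => i₀ < j ∧ σ j < σ i₀ ∧ ∃ l, j < l ∧ σ l < σ j) with hJ
  have hJne : J.Nonempty := ⟨j₁, by
    rw [hJ, Finset.mem_filter]; exact ⟨Finset.mem_univ _, hij₁, hv₂, l₁, hjl₁, hv₁⟩⟩
  obtain ⟨j₀, hj₀J, hj₀max⟩ := J.exists_max_image (fun j => j.val) hJne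
  rw [hJ, Finset.mem_filter] at hj₀J
  obtain ⟨-, hij₀, hvj₀, l₂, hjl₂, hvl₂⟩ := hj₀J
  set L : Finset (Fin n) := Finset.univ.filter (fun l => j₀ < l ∧ σ l < σ j₀) with hL
  have hLne : L.Nonempty := ⟨l₂, by
    rw [hL, Finset.mem_filter]; exact ⟨Finset.mem_univ _, hjl₂, hvl₂⟩⟩
  obtain ⟨l₀, hl₀L, hl₀min⟩ := L.exists_min_image (fun l => l.val) hLne
  rw [hL, Finset.mem_filter] at hl₀L
  obtain ⟨-, hjl₀, hvl₀⟩ := hl₀L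
  refine hs ((σ i₀).val + 1) ⟨i₀, j₀, l₀, hij₀, hjl₀, by omega,
    (by have := Fin.lt_def.1 hvj₀; omega), (by
      have := Fin.lt_def.1 hvj₀; have := Fin.lt_def.1 hvl₀; omega),
    hvl₀, hvj₀, ?_, ?_⟩
  · -- gap between i₀ and j₀
    intro m him hmj
    by_contra hc
    push_neg at hc
    have hmv : σ m < σ i₀ := by
      rcases lt_or_eq_of_le (Fin.le_def.2 (by omega : (σ m).val ≤ (σ i₀).val)) with h | h
      · exact h
      · exact absurd (σ.injective h) (by rintro rfl; exact lt_irrefl _ him)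
    rcases lt_trichotomy (σ m) (σ j₀) with hc1 | hc1 | hc1
    · exact h312 ⟨i₀, m, j₀, him, hmj, hc1, hvj₀⟩
    · exact absurd (σ.injective hc1) (by rintro rfl; exact lt_irrefl _ hmj)
    · have hmT : m ∈ T := by
        rw [hT, Finset.mem_filter]
        exact ⟨Finset.mem_univ _, j₀, l₀, hmj, hjl₀, hvl₀, hc1⟩
      have := hi₀min m hmT
      have := Fin.lt_def.1 hmv
      omega
  · -- gap between j₀ and l₀
    intro m hjm hml
    by_contra hc
    push_neg at hc
    have hmv : σ m < σ i₀ := by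
      rcases lt_or_eq_of_le (Fin.le_def.2 (by omega : (σ m).val ≤ (σ i₀).val)) with h | h
      · exact h
      · exact absurd (σ.injective h)
          (by rintro rfl; exact lt_irrefl _ (lt_trans hij₀ hjm))
    rcases lt_trichotomy (σ m) (σ j₀) with hc1 | hc1 | hc1
    · have hmL : m ∈ L := by rw [hL, Finset.mem_filter]; exact ⟨Finset.mem_univ _, hjm, hc1⟩
      have := hl₀min m hmL
      have := Fin.lt_def.1 hml
      omega
    · exact absurd (σ.injective hc1) (by rintro rfl; exact lt_irrefl _ hjm)
    · have hmJ : m ∈ J := by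
        rw [hJ, Finset.mem_filter]
        exact ⟨Finset.mem_univ _, lt_trans hij₀ hjm, hmv, l₀, hml, lt_trans hvl₀ hc1⟩
      have := hj₀max m hmJ
      have := Fin.lt_def.1 hjm
      omega

theorem bnd_of {σ : Equiv.Perm (Fin n)} (h312 : Avoids312 σ) (hs : Simsun σ) : Bnd σ := by
  classical
  have h321 := av321_of h312 hs
  intro i
  by_contra hc
  push_neg at hc
  set P2 : Finset (Fin n) := Finset.univ.filter (fun m => i < m ∧ σ m < σ i) with hP2
  set Plt : Finset (Fin n) := Finset.univ.filter (fun m => m < i ∧ σ m < σ i) with hPlt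
  set Pos : Finset (Fin n) := Finset.univ.filter (fun m => σ m < σ i) with hPos
  have hPoscard : Pos.card = (σ i).val := by
    rw [← Fin.card_Iio (σ i)]
    apply Finset.card_bij (fun m _ => σ m)
    · intro m hm; rw [hPos, Finset.mem_filter] at hm; exact Finset.mem_Iio.2 hm.2
    · intro m₁ h₁ m₂ h₂ h; exact σ.injective h
    · intro v hv
      refine ⟨σ⁻¹ v, ?_, by simp⟩
      rw [hPos, Finset.mem_filter]
      exact ⟨Finset.mem_univ _, by simpa using Finset.mem_Iio.1 hv⟩
  have hPltcard : Plt.card ≤ i.val := by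
    rw [← Fin.card_Iio i]
    apply Finset.card_le_card
    intro m hm; rw [hPlt, Finset.mem_filter] at hm; exact Finset.mem_Iio.2 hm.2.1
  have hsub : Pos ⊆ Plt ∪ P2 := by
    intro m hm
    rw [hPos, Finset.mem_filter] at hm
    have hmi : m ≠ i := by rintro rfl; exact lt_irrefl _ hm.2
    rcases lt_or_gt_of_ne hmi with h | h
    · exact Finset.mem_union_left _ (by rw [hPlt, Finset.mem_filter]; exact ⟨hm.1, h, hm.2⟩)
    · exact Finset.mem_union_right _ (by rw [hP2, Finset.mem_filter]; exact ⟨hm.1, h, hm.2⟩)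
  have hcard2 : 1 < P2.card := by
    have := Finset.card_le_card hsub
    have := Finset.card_union_le Plt P2
    omega
  obtain ⟨p, hp, q, hq, hpq⟩ := Finset.one_lt_card.1 hcard2
  rw [hP2, Finset.mem_filter] at hp hq
  rcases lt_or_gt_of_ne hpq with h | h
  · rcases lt_trichotomy (σ p) (σ q) with h1 | h1 | h1
    · exact h312 ⟨i, p, q, hp.2.1, h, h1, hq.2.2⟩
    · exact hpq (σ.injective h1)
    · exact h321 ⟨i, p, q, hp.2.1, h, h1, hp.2.2⟩
  · rcases lt_trichotomy (σ q) (σ p) with h1 | h1 | h1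
    · exact h312 ⟨i, q, p, hq.2.1, h, h1, hp.2.2⟩
    · exact hpq (σ.injective h1.symm)
    · exact h321 ⟨i, q, p, hq.2.1, h, h1, hq.2.2⟩

theorem char_iff {σ : Equiv.Perm (Fin n)} :
    (Avoids312 σ ∧ DoubleSimsun σ) ↔ Bnd σ := by
  constructor
  · rintro ⟨h1, h2, _⟩; exact bnd_of h1 h2
  · intro h
    exact ⟨bnd_av312 h, av321_simsun (bnd_av321 h),
      av321_simsun (av321_inv (bnd_av321 h))⟩


open Finset in
noncomputable def dstat (σ : Equiv.Perm (Fin n)) : ℕ :=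
  (Finset.univ.filter fun i : Fin n => (σ i).val < i.val).card

open scoped Classical in
noncomputable def mark (σ : Equiv.Perm (Fin n)) : Finset (Fin n) :=
  Finset.univ.filter fun i => (σ i).val < i.val ∨ i.val < (σ⁻¹ i).val

theorem not_both {σ : Equiv.Perm (Fin n)} (hσ : Bnd σ) {i : Fin n}
    (h : (σ i).val < i.val) : ¬ i.val < (σ⁻¹ i).val := by
  intro hgt
  have hkey := key hσ (i := σ⁻¹ i) (j := i) (Fin.lt_def.2 hgt) (by simp)
  omega

theorem card_inv_lt {σ : Equiv.Perm (Fin n)} :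
    (Finset.univ.filter fun i : Fin n => i.val < (σ⁻¹ i).val).card = dstat σ := by
  classical
  rw [dstat]
  apply Finset.card_bij (fun a _ => σ⁻¹ a)
  · intro a ha
    rw [Finset.mem_filter] at ha ⊢
    refine ⟨Finset.mem_univ _, ?_⟩
    simpa using ha.2
  · intro a _ b _ h; exact σ⁻¹.injective h
  · intro m hm
    rw [Finset.mem_filter] at hm
    exact ⟨σ m, by rw [Finset.mem_filter]; refine ⟨Finset.mem_univ _, ?_⟩; simpa using hm.2,
      by simp⟩

theorem numDescents_eq {σ : Equiv.Perm (Fin n)} (hσ : Bnd σ) :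
    numDescents σ = dstat σ := by
  classical
  rw [numDescents, dstat]
  apply Finset.card_bij
    (fun i hi => (⟨i.val + 1, ((Finset.mem_filter.1 hi).2).choose⟩ : Fin n))
  · intro a ha
    rw [Finset.mem_filter]
    refine ⟨Finset.mem_univ _, ?_⟩
    have hspec := ((Finset.mem_filter.1 ha).2).choose_spec
    have h1 := Fin.lt_def.1 hspec
    have h2 := hσ a
    simpa using (by omega : (σ (⟨a.val + 1, _⟩ : Fin n)).val < a.val + 1)
  · intro a _ b _ h
    have := Fin.val_eq_of_eq h
    exact Fin.ext (by simpa using this)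
  · intro m hm
    rw [Finset.mem_filter] at hm
    have hm2 := hm.2
    have hm1 : 1 ≤ m.val := by omega
    set a : Fin n := ⟨m.val - 1, by omega⟩ with hadef
    have haval : a.val + 1 = m.val := by simp [hadef]; omega
    have hmem : a ∈ Finset.univ.filter fun i : Fin n =>
        ∃ h : i.val + 1 < n, σ ⟨i.val + 1, h⟩ < σ i := by
      rw [Finset.mem_filter]
      refine ⟨Finset.mem_univ _, ⟨by omega, ?_⟩⟩
      have hkey : (σ a).val = a.val + 1 := by
        refine key hσ (i := m) (j := a) (Fin.lt_def.2 (by omega)) (by omega)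
      have hgen : ∀ h2 : a.val + 1 < n, σ ⟨a.val + 1, h2⟩ < σ a := by
        intro h2
        have hma : (⟨a.val + 1, h2⟩ : Fin n) = m := by
          apply Fin.ext
          simpa using (by omega : a.val + 1 = m.val)
        rw [hma, Fin.lt_def, hkey]
        omega
      exact hgen _
    exact ⟨a, hmem, Fin.ext (by simpa using haval)⟩


theorem numDescents_inv_eq {σ : Equiv.Perm (Fin n)} (hσ : Bnd σ) :
    numDescents σ⁻¹ = dstat σ := by
  classical
  rw [numDescents, ← card_inv_lt (σ := σ)]
  congr 1
  ext i
  simp only [Finset.mem_filter, Finset.mem_univ, true_and]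
  constructor
  · rintro ⟨h, hlt⟩
    by_contra hle
    push_neg at hle
    set p := σ⁻¹ (⟨i.val + 1, h⟩ : Fin n) with hp
    have h2 : (σ p).val = i.val + 1 := by rw [hp]; simp
    have hb := hσ p
    have h3 := Fin.lt_def.1 hlt
    have h4 := Fin.le_def.1 hle
    omega
  · intro hgt
    have h : i.val + 1 < n := lt_of_le_of_lt hgt (σ⁻¹ i).isLt
    refine ⟨h, ?_⟩
    have hkey : (σ i).val = i.val + 1 :=
      key hσ (i := σ⁻¹ i) (j := i) (Fin.lt_def.2 hgt) (by simp)
    have heq : σ i = ⟨i.val + 1, h⟩ := Fin.ext hkey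
    have h2 : σ⁻¹ (⟨i.val + 1, h⟩ : Fin n) = i := by rw [← heq]; simp
    rw [h2]
    exact Fin.lt_def.2 hgt

theorem mark_card {σ : Equiv.Perm (Fin n)} (hσ : Bnd σ) :
    (mark σ).card = 2 * dstat σ := by
  classical
  have hsplit : mark σ = (Finset.univ.filter fun i : Fin n => (σ i).val < i.val) ∪
      (Finset.univ.filter fun i : Fin n => i.val < (σ⁻¹ i).val) := by
    rw [mark]
    ext i
    simp only [Finset.mem_filter, Finset.mem_union, Finset.mem_univ, true_and]
  rw [hsplit, Finset.card_union_of_disjoint, card_inv_lt]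
  · show dstat σ + dstat σ = 2 * dstat σ
    ring
  · rw [Finset.disjoint_left]
    intro i hi hi'
    rw [Finset.mem_filter] at hi hi'
    exact not_both hσ hi.2 hi'.2


theorem no_lt {σ τ : Equiv.Perm (Fin n)} (hσ : Bnd σ) (hτ : Bnd τ) (hm : mark σ = mark τ)
    {i : Fin n} (ih : ∀ m : Fin n, m.val < i.val → σ m = τ m) :
    ¬ (τ i).val < (σ i).val := by
  classical
  intro hlt
  have hb := hσ i
  have hτb := hτ i
  have h1 : (τ i).val ≤ i.val := by omega
  rcases eq_or_lt_of_le h1 with heq | ha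
  · -- τ i = i
    have hτi : τ i = i := Fin.ext heq
    have hσne : σ i ≠ i := fun h => by rw [h] at hlt; omega
    have hq : i.val < (σ⁻¹ i).val := by
      rcases lt_trichotomy (σ⁻¹ i).val i.val with h | h | h
      · exfalso
        set m := σ⁻¹ i with hmd
        have h2 : σ m = i := by simp [hmd]
        have h3 : τ m = i := by rw [← ih m h, h2]
        have : m = i := τ.injective (by rw [h3, hτi])
        rw [this] at h; omega
      · exfalso
        have h2 : σ⁻¹ i = i := Fin.ext h
        have h3 := congrArg σ h2
        simp only [Equiv.Perm.apply_inv_self] at h3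
        exact hσne h3.symm
      · exact h
    have hiσ : i ∈ mark σ := by
      rw [mark, Finset.mem_filter]; exact ⟨Finset.mem_univ _, Or.inr hq⟩
    rw [hm, mark, Finset.mem_filter] at hiσ
    rcases hiσ.2 with h | h
    · omega
    · rw [show τ⁻¹ i = i from τ.injective (by simp [hτi])] at h; omega
  · -- τ i < i
    have hstep : ∀ j : Fin n, (τ i).val ≤ j.val → j.val < i.val → (σ j).val = j.val + 1 := by
      intro j hj1 hj2
      have := key hτ (i := i) (j := j) (Fin.lt_def.2 hj2) hj1
      rw [ih j hj2]
      exact this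
    have hqgt : i.val < (σ⁻¹ (τ i)).val := by
      rcases lt_trichotomy (σ⁻¹ (τ i)).val i.val with h | h | h
      · exfalso
        set q := σ⁻¹ (τ i) with hqd
        have h2 : σ q = τ i := by simp [hqd]
        have h3 : τ q = τ i := by rw [← ih q h, h2]
        have : q = i := τ.injective h3
        rw [this] at h; omega
      · exfalso
        have h2 : σ⁻¹ (τ i) = i := Fin.ext h
        have h3 := congrArg σ h2
        simp only [Equiv.Perm.apply_inv_self] at h3
        omega
      · exact h
    have hσi : (σ i).val = i.val + 1 :=
      key hσ (i := σ⁻¹ (τ i)) (j := i) (Fin.lt_def.2 hqgt) (by simpa using h1)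
    have hiτ : i ∈ mark τ := by
      rw [mark, Finset.mem_filter]; exact ⟨Finset.mem_univ _, Or.inl ha⟩
    rw [← hm, mark, Finset.mem_filter] at hiτ
    rcases hiτ.2 with h | h
    · omega
    · -- i < σ⁻¹ i, but σ (i-1) = i
      set p : Fin n := ⟨i.val - 1, by omega⟩ with hpd
      have hp : (σ p).val = p.val + 1 := hstep p (by simp [hpd]; omega) (by simp [hpd]; omega)
      have hp2 : σ p = i := Fin.ext (by simp [hpd] at hp ⊢; omega)
      have : σ⁻¹ i = p := by rw [← hp2]; simp
      rw [this] at h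
      simp [hpd] at h
      omega

theorem mark_inj {σ τ : Equiv.Perm (Fin n)} (hσ : Bnd σ) (hτ : Bnd τ)
    (hm : mark σ = mark τ) : σ = τ := by
  have H : ∀ N : ℕ, ∀ i : Fin n, i.val < N → σ i = τ i := by
    intro N
    induction N with
    | zero => intro i hi; omega
    | succ N ihN =>
      intro i hi
      rcases Nat.lt_or_ge i.val N with h | h
      · exact ihN i h
      · have ih : ∀ m : Fin n, m.val < i.val → σ m = τ m := fun m hmv => ihN m (by omega)
        have ih' : ∀ m : Fin n, m.val < i.val → τ m = σ m := fun m hmv => (ih m hmv).symm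
        rcases lt_trichotomy (σ i).val (τ i).val with h1 | h1 | h1
        · exact absurd h1 (no_lt hτ hσ hm.symm ih')
        · exact Fin.ext h1
        · exact absurd h1 (no_lt hσ hτ hm ih)
  exact Equiv.ext fun i => H (i.val + 1) i (by omega)


def cyc (a b : Fin n) (hab : a < b) : Equiv.Perm (Fin n) where
  toFun i := if h : a ≤ i ∧ i < b then
      ⟨i.val + 1, by have := Fin.lt_def.1 h.2; have := b.isLt; omega⟩
    else if i = b then a else i
  invFun i := if h : a < i ∧ i ≤ b then ⟨i.val - 1, by have := i.isLt; omega⟩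
    else if i = a then b else i
  left_inv := by
    intro i
    have hab' := Fin.lt_def.1 hab
    simp only
    split_ifs <;>
      simp only [Fin.ext_iff, Fin.le_def, Fin.lt_def, Fin.val_mk, not_and, not_lt, not_le] at * <;>
      first | omega | exact absurd trivial (by assumption)
  right_inv := by
    intro i
    have hab' := Fin.lt_def.1 hab
    simp only
    split_ifs <;>
      simp only [Fin.ext_iff, Fin.le_def, Fin.lt_def, Fin.val_mk, not_and, not_lt, not_le] at * <;>
      first | omega | exact absurd trivial (by assumption)


variable {a b i : Fin n} {hab : a < b}

lemma cyc_lt (h : i < a) : cyc a b hab i = i := by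
  simp only [cyc, Equiv.coe_fn_mk]
  rw [dif_neg, if_neg]
  · rintro rfl; exact absurd (lt_trans hab h) (lt_irrefl _)
  · rintro ⟨h1, -⟩; exact absurd h1 (not_le.2 h)

lemma cyc_mem (h1 : a ≤ i) (h2 : i < b) : (cyc a b hab i).val = i.val + 1 := by
  simp only [cyc, Equiv.coe_fn_mk]
  rw [dif_pos ⟨h1, h2⟩]

lemma cyc_b : cyc a b hab b = a := by
  simp only [cyc, Equiv.coe_fn_mk]
  rw [dif_neg]
  · simp
  · rintro ⟨-, h2⟩; exact absurd h2 (lt_irrefl _)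

lemma cyc_gt (h : b < i) : cyc a b hab i = i := by
  simp only [cyc, Equiv.coe_fn_mk]
  rw [dif_neg, if_neg]
  · rintro rfl; exact absurd h (lt_irrefl _)
  · rintro ⟨-, h2⟩; exact absurd (lt_trans h h2) (lt_irrefl _)

lemma cyc_inv_lt (h : i < a) : (cyc a b hab)⁻¹ i = i :=
  (cyc a b hab).injective (by rw [Equiv.Perm.apply_inv_self, cyc_lt h])

lemma cyc_inv_a : (cyc a b hab)⁻¹ a = b :=
  (cyc a b hab).injective (by rw [Equiv.Perm.apply_inv_self, cyc_b])

lemma cyc_inv_gt (h : b < i) : (cyc a b hab)⁻¹ i = i :=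
  (cyc a b hab).injective (by rw [Equiv.Perm.apply_inv_self, cyc_gt h])

lemma cyc_inv_mem (h1 : a < i) (h2 : i ≤ b) :
    (cyc a b hab)⁻¹ i = ⟨i.val - 1, by have := i.isLt; omega⟩ := by
  apply (cyc a b hab).injective
  rw [Equiv.Perm.apply_inv_self]
  apply Fin.ext
  rw [cyc_mem]
  · have := Fin.lt_def.1 h1; simp; omega
  · rw [Fin.le_def]; have := Fin.lt_def.1 h1; simp; omega
  · rw [Fin.lt_def]; have := Fin.le_def.1 h2; have := Fin.lt_def.1 h1
    have := Fin.lt_def.1 hab; simp; omega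


lemma mem_mark {σ : Equiv.Perm (Fin n)} {i : Fin n} :
    i ∈ mark σ ↔ ((σ i).val < i.val ∨ i.val < (σ⁻¹ i).val) := by
  classical
  rw [mark, Finset.mem_filter]
  simp

theorem exists_perm : ∀ (m : ℕ) (s : Finset (Fin n)), s.card = 2 * m →
    ∃ σ : Equiv.Perm (Fin n), Bnd σ ∧ mark σ = s ∧ (∀ i : Fin n, σ i ≠ i → ∃ c ∈ s, i ≤ c) := by
  intro m
  induction m with
  | zero =>
    intro s hs
    have : s = ∅ := Finset.card_eq_zero.1 (by omega)
    subst this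
    refine ⟨1, fun i => by simp, ?_, fun i hi => absurd rfl hi⟩
    ext i
    simp [mem_mark]
  | succ m ih =>
    intro s hs
    have hne : s.Nonempty := Finset.card_pos.1 (by omega)
    set b := s.max' hne with hbdef
    have hbs : b ∈ s := s.max'_mem hne
    have hcard1 : (s.erase b).card = 2 * m + 1 := by
      rw [Finset.card_erase_of_mem hbs]; omega
    have hne2 : (s.erase b).Nonempty := Finset.card_pos.1 (by omega)
    set a := (s.erase b).max' hne2 with hadef
    have haeb : a ∈ s.erase b := Finset.max'_mem _ hne2
    have has : a ∈ s := Finset.mem_of_mem_erase haeb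
    have hanb : a ≠ b := Finset.ne_of_mem_erase haeb
    have hab : a < b := lt_of_le_of_ne (s.le_max' a has) hanb
    set s' : Finset (Fin n) := (s.erase b).erase a with hs'def
    have hcard' : s'.card = 2 * m := by
      rw [hs'def, Finset.card_erase_of_mem haeb]; omega
    have hs'lt : ∀ c ∈ s', c < a := by
      intro c hc
      have h1 : c ≠ a := Finset.ne_of_mem_erase hc
      have h2 : c ∈ s.erase b := Finset.mem_of_mem_erase hc
      exact lt_of_le_of_ne (Finset.le_max' _ c h2) h1
    have hs'sub : s' ⊆ s := fun c hc =>
      Finset.mem_of_mem_erase (Finset.mem_of_mem_erase hc)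
    obtain ⟨σ', hB', hm', hsup'⟩ := ih s' hcard'
    have hfix : ∀ i : Fin n, a ≤ i → σ' i = i := by
      intro i hi
      by_contra hne'
      obtain ⟨c, hc, hic⟩ := hsup' i hne'
      exact absurd (le_trans hi hic) (not_le.2 (hs'lt c hc))
    have hinvfix : ∀ i : Fin n, a ≤ i → σ'⁻¹ i = i := by
      intro i hi
      exact σ'.injective (by rw [Equiv.Perm.apply_inv_self, hfix i hi])
    have himg : ∀ i : Fin n, i < a → σ' i < a := by
      intro i hi
      by_contra hge
      push_neg at hge
      have := hfix (σ' i) hge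
      have : σ' i = i := σ'.injective this
      rw [this] at hge
      exact absurd hi (not_lt.2 hge)
    have hinvimg : ∀ i : Fin n, i < a → σ'⁻¹ i < a := by
      intro i hi
      by_contra hge
      push_neg at hge
      have h1 := hfix (σ'⁻¹ i) hge
      rw [Equiv.Perm.apply_inv_self] at h1
      rw [← h1] at hge
      exact absurd hi (not_lt.2 hge)
    set σ : Equiv.Perm (Fin n) := cyc a b hab * σ' with hσdef
    have happ_lt : ∀ i : Fin n, i < a → σ i = σ' i := by
      intro i hi
      rw [hσdef, Equiv.Perm.mul_apply, cyc_lt (himg i hi)]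
    have happ_mem : ∀ i : Fin n, a ≤ i → i < b → (σ i).val = i.val + 1 := by
      intro i h1 h2
      rw [hσdef, Equiv.Perm.mul_apply, hfix i h1, cyc_mem h1 h2]
    have happ_b : σ b = a := by
      rw [hσdef, Equiv.Perm.mul_apply, hfix b (le_of_lt hab), cyc_b]
    have happ_gt : ∀ i : Fin n, b < i → σ i = i := by
      intro i hi
      rw [hσdef, Equiv.Perm.mul_apply, hfix i (le_of_lt (lt_trans hab hi)), cyc_gt hi]
    have hinv : σ⁻¹ = σ'⁻¹ * (cyc a b hab)⁻¹ := by rw [hσdef, mul_inv_rev]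
    have hinv_lt : ∀ i : Fin n, i < a → σ⁻¹ i = σ'⁻¹ i := by
      intro i hi
      rw [hinv, Equiv.Perm.mul_apply, cyc_inv_lt hi]
    have hinv_a : σ⁻¹ a = b := by
      rw [hinv, Equiv.Perm.mul_apply, cyc_inv_a, hinvfix b (le_of_lt hab)]
    have hinv_mem : ∀ i : Fin n, a < i → i ≤ b → (σ⁻¹ i).val = i.val - 1 := by
      intro i h1 h2
      rw [hinv, Equiv.Perm.mul_apply, cyc_inv_mem h1 h2, hinvfix _ (by
        rw [Fin.le_def]; have := Fin.lt_def.1 h1; simp; omega)]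
    have hinv_gt : ∀ i : Fin n, b < i → σ⁻¹ i = i := by
      intro i hi
      rw [hinv, Equiv.Perm.mul_apply, cyc_inv_gt hi, hinvfix i (le_of_lt (lt_trans hab hi))]
    refine ⟨σ, ?_, ?_, ?_⟩
    · -- Bnd
      intro i
      rcases lt_trichotomy i a with h | h | h
      · rw [happ_lt i h]; exact hB' i
      · have h1 : (σ i).val = i.val + 1 := happ_mem i h.ge (lt_of_le_of_lt h.le hab)
        omega
      · rcases lt_trichotomy i b with h2 | h2 | h2
        · rw [happ_mem i (le_of_lt h) h2]
        · subst h2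
          rw [happ_b]
          have := Fin.lt_def.1 hab; omega
        · rw [happ_gt i h2]; omega
    · -- mark σ = s
      ext i
      rw [mem_mark]
      rcases lt_trichotomy i a with h | h | h
      · rw [happ_lt i h, hinv_lt i h]
        rw [show ((σ' i).val < i.val ∨ i.val < (σ'⁻¹ i).val) ↔ i ∈ mark σ' from mem_mark.symm,
          hm']
        constructor
        · intro hi; exact hs'sub hi
        · intro hi
          rw [hs'def, Finset.mem_erase, Finset.mem_erase]
          refine ⟨fun he => ?_, fun he => ?_, hi⟩
          · rw [he] at h; exact absurd h (lt_irrefl _)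
          · rw [he] at h; exact absurd (lt_trans hab h) (lt_irrefl _)
      · subst h
        have h1 := hinv_a
        simp only [h1]
        have := Fin.lt_def.1 hab
        constructor
        · intro _; exact has
        · intro _; right; omega
      · rcases lt_trichotomy i b with h2 | h2 | h2
        · -- a < i < b : not in mark, not in s
          have hv1 := happ_mem i (le_of_lt h) h2
          have hv2 := hinv_mem i h (le_of_lt h2)
          have hia := Fin.lt_def.1 h
          constructor
          · intro hor; exfalso; rcases hor with h3 | h3 <;> omega
          · intro hi
            exfalso
            have : i ∈ s.erase b := Finset.mem_erase.2 ⟨fun he => by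
              rw [he] at h2; exact absurd h2 (lt_irrefl _), hi⟩
            have := Finset.le_max' _ i this
            rw [← hadef] at this
            exact absurd h (not_lt.2 this)
        · subst h2
          rw [happ_b]
          have := Fin.lt_def.1 hab
          constructor
          · intro _; exact hbs
          · intro _; left; omega
        · rw [happ_gt i h2, hinv_gt i h2]
          constructor
          · intro hor; exfalso; rcases hor with h3 | h3 <;> omega
          · intro hi
            exfalso
            have := Finset.le_max' s i hi
            rw [← hbdef] at this
            exact absurd h2 (not_lt.2 this)
    · -- support
      intro i hi
      rcases lt_trichotomy i a with h | h | h
      · rw [happ_lt i h] at hi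
        obtain ⟨c, hc, hic⟩ := hsup' i hi
        exact ⟨c, hs'sub hc, hic⟩
      · exact ⟨b, hbs, le_of_lt (by rw [h]; exact hab)⟩
      · rcases le_or_gt i b with h2 | h2
        · exact ⟨b, hbs, h2⟩
        · exact absurd (happ_gt i h2) hi


theorem av231_iff {σ : Equiv.Perm (Fin n)} : Avoids231 σ ↔ Avoids312 σ⁻¹ := by
  constructor
  · intro h231
    rintro ⟨i, j, l, hij, hjl, h1, h2⟩
    refine h231 ⟨σ⁻¹ j, σ⁻¹ l, σ⁻¹ i, h1, h2, ?_, ?_⟩ <;>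
      simp only [Equiv.Perm.apply_inv_self] <;> assumption
  · intro h312
    rintro ⟨x, y, z, hxy, hyz, hc1, hc2⟩
    refine h312 ⟨σ z, σ x, σ y, hc1, hc2, ?_, ?_⟩ <;>
      simp only [Equiv.Perm.inv_apply_self] <;> assumption

theorem char_iff' {σ : Equiv.Perm (Fin n)} {k : ℕ} :
    (Avoids312 σ ∧ DoubleSimsun σ ∧ numDescents σ = k) ↔ (Bnd σ ∧ dstat σ = k) := by
  constructor
  · rintro ⟨h1, h2, h3⟩
    have hb := char_iff.1 ⟨h1, h2⟩
    exact ⟨hb, by rw [← numDescents_eq hb, h3]⟩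
  · rintro ⟨hb, hk⟩
    obtain ⟨h1, h2⟩ := char_iff.2 hb
    exact ⟨h1, h2, by rw [numDescents_eq hb, hk]⟩

theorem main312 (n k : ℕ) :
    Nat.card {σ : Equiv.Perm (Fin n) // Avoids312 σ ∧ DoubleSimsun σ ∧ numDescents σ = k} =
      n.choose (2 * k) := by
  classical
  have e1 : {σ : Equiv.Perm (Fin n) // Avoids312 σ ∧ DoubleSimsun σ ∧ numDescents σ = k} ≃
      {σ : Equiv.Perm (Fin n) // Bnd σ ∧ dstat σ = k} :=
    Equiv.subtypeEquivRight (fun σ => char_iff')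
  have hbij : Function.Bijective
      (fun σp : {σ : Equiv.Perm (Fin n) // Bnd σ ∧ dstat σ = k} =>
        (⟨mark σp.1, by rw [mark_card σp.2.1, σp.2.2]⟩ :
          {s : Finset (Fin n) // s.card = 2 * k})) := by
    constructor
    · rintro ⟨σ, hσ⟩ ⟨τ, hτ⟩ h
      simp only [Subtype.mk_eq_mk] at h
      exact Subtype.ext (mark_inj hσ.1 hτ.1 h)
    · rintro ⟨s, hscard⟩
      obtain ⟨σ, hB, hmark, -⟩ := exists_perm k s hscard
      have hd : dstat σ = k := by
        have := mark_card hB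
        rw [hmark, hscard] at this
        omega
      exact ⟨⟨σ, hB, hd⟩, Subtype.ext hmark⟩
  have e2 := Equiv.ofBijective _ hbij
  rw [Nat.card_congr (e1.trans e2), Nat.card_eq_fintype_card, Fintype.card_finset_len,
    Fintype.card_fin]

theorem main231 (n k : ℕ) :
    Nat.card {σ : Equiv.Perm (Fin n) // Avoids231 σ ∧ DoubleSimsun σ ∧ numDescents σ = k} =
      n.choose (2 * k) := by
  classical
  rw [← main312 n k]
  apply Nat.card_congr
  refine ⟨fun σp => ⟨σp.1⁻¹, ?_⟩, fun σp => ⟨σp.1⁻¹, ?_⟩, ?_, ?_⟩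
  · obtain ⟨σ, h1, h2, h3⟩ := σp
    have h312 : Avoids312 σ⁻¹ := av231_iff.1 h1
    have hDS : DoubleSimsun σ⁻¹ := ⟨h2.2, by rw [inv_inv]; exact h2.1⟩
    have hb : Bnd σ⁻¹ := char_iff.1 ⟨h312, hDS⟩
    refine ⟨h312, hDS, ?_⟩
    rw [numDescents_eq hb, ← numDescents_inv_eq hb, inv_inv, h3]
  · obtain ⟨σ, h1, h2, h3⟩ := σp
    have hb : Bnd σ := char_iff.1 ⟨h1, h2⟩
    have h231 : Avoids231 σ⁻¹ := av231_iff.2 (by rw [inv_inv]; exact h1)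
    refine ⟨h231, ⟨h2.2, by rw [inv_inv]; exact h2.1⟩, ?_⟩
    rw [numDescents_inv_eq hb, ← numDescents_eq hb, h3]
  · rintro ⟨σ, h⟩; exact Subtype.ext (inv_inv σ)
  · rintro ⟨σ, h⟩; exact Subtype.ext (inv_inv σ)

end DS

/-- The number of 312-avoiding double simsun permutations in `S_n` with
exactly `k` descents is `C(n, 2k)`; the same holds for 231-avoiding double
simsun permutations. -/
theorem card_doubleSimsun_descents_eq_choose (n k : ℕ) :
    Nat.card {σ : Equiv.Perm (Fin n) // Avoids312 σ ∧ DoubleSimsun σ ∧ numDescents σ = k} =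
      n.choose (2 * k) ∧
    Nat.card {σ : Equiv.Perm (Fin n) // Avoids231 σ ∧ DoubleSimsun σ ∧ numDescents σ = k} =
      n.choose (2 * k) := by
  exact ⟨DS.main312 n k, DS.main231 n k⟩
end

section
/- Every 321-avoiding simsun permutation is double simsun, and the number of 321-avoiding double simsun permutations in S_n equals the Catalan number C_n. -/
set_option maxHeartbeats 1000000


/-- Staircase sequences on `{0,...,n-1}`: monotone, `i ≤ m i < n`, zero outside. -/
def Stair (n : ℕ) : Type :=
  {m : ℕ → ℕ // (∀ i j, i ≤ j → j < n → m i ≤ m j) ∧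
    (∀ i, i < n → (i ≤ m i ∧ m i < n)) ∧ (∀ i, n ≤ i → m i = 0)}

instance stairFinite (n : ℕ) : Finite (Stair n) := by
  apply Finite.of_injective
    (fun m : Stair n => (fun i : Fin n => (⟨m.1 i, (m.2.2.1 i i.2).2⟩ : Fin n)))
  intro a b hab
  apply Subtype.ext
  funext i
  by_cases hi : i < n
  · have := congrFun hab ⟨i, hi⟩
    simpa [Fin.mk.injEq] using this
  · show a.1 i = b.1 i
    rw [a.2.2.2 i (le_of_not_gt hi), b.2.2.2 i (le_of_not_gt hi)]

lemma stair_zero_card : Nat.card (Stair 0) = 1 := by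
  rw [Nat.card_eq_one_iff_unique]
  constructor
  · constructor
    rintro ⟨a, ha⟩ ⟨b, hb⟩
    apply Subtype.ext
    funext i
    show a i = b i
    rw [ha.2.2 i (Nat.zero_le i), hb.2.2 i (Nat.zero_le i)]
  · exact ⟨⟨fun _ => 0, by simp, by simp, by simp⟩⟩

section FF
variable {n : ℕ}

lemma stair_exists_fix (m : Stair (n+1)) : ∃ i, m.1 i = i ∧ i ≤ n := by
  refine ⟨n, ?_, le_refl n⟩
  have := m.2.2.1 n (by omega)
  omega

/-- first fixed point -/
noncomputable def ffix (m : Stair (n+1)) : Fin (n+1) :=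
  ⟨Nat.find (stair_exists_fix m), by
    have := Nat.find_spec (stair_exists_fix m); omega⟩

lemma ffix_spec (m : Stair (n+1)) : m.1 (ffix m) = (ffix m : ℕ) :=
  (Nat.find_spec (stair_exists_fix m)).1

lemma ffix_min (m : Stair (n+1)) {i : ℕ} (h : i < (ffix m : ℕ)) : m.1 i ≠ i := by
  intro hc
  have hle : (ffix m : ℕ) ≤ n := by have := (ffix m).isLt; omega
  exact Nat.find_min (stair_exists_fix m) h ⟨hc, by omega⟩

lemma ffix_eq_iff (m : Stair (n+1)) (k : Fin (n+1)) :
    ffix m = k ↔ (m.1 k = (k : ℕ) ∧ ∀ i, i < (k : ℕ) → m.1 i ≠ i) := by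
  constructor
  · rintro rfl
    exact ⟨ffix_spec m, fun i hi => ffix_min m hi⟩
  · rintro ⟨hk, hlt⟩
    have h1 : (ffix m : ℕ) ≤ (k : ℕ) := Nat.find_le ⟨hk, by have := k.isLt; omega⟩
    have h2 : ¬ ((ffix m : ℕ) < (k : ℕ)) := fun hc => hlt _ hc (ffix_spec m)
    exact Fin.ext (by omega)

/-- forward: left part -/
def fwd1 (k : ℕ) (m : ℕ → ℕ) : ℕ → ℕ := fun i => if i < k then m i - 1 else 0
/-- forward: right part -/
def fwd2 (k n : ℕ) (m : ℕ → ℕ) : ℕ → ℕ :=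
  fun j => if j < n - k then m (k + 1 + j) - (k + 1) else 0
/-- backward -/
def bwd (k n : ℕ) (f g : ℕ → ℕ) : ℕ → ℕ := fun i =>
  if i < k then f i + 1 else if i = k then k else if i ≤ n then g (i - (k+1)) + k + 1 else 0

noncomputable def fibEquiv (k : Fin (n+1)) :
    {m : Stair (n+1) // ffix m = k} ≃ Stair (k : ℕ) × Stair (n - (k : ℕ)) where
  toFun m :=
    (⟨fwd1 (k : ℕ) m.1.1, by
        obtain ⟨hk, hlt⟩ := (ffix_eq_iff _ k).mp m.2
        obtain ⟨hmono, hrange, hjunk⟩ := m.1.2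
        have hkn : (k : ℕ) ≤ n := by have := k.isLt; omega
        unfold fwd1
        refine ⟨?_, ?_, ?_⟩
        · intro i j hij hjk
          have h1 := hmono i j hij (by omega)
          simp only [if_pos hjk, if_pos (lt_of_le_of_lt hij hjk)]
          omega
        · intro i hik
          have h1 := (hrange i (by omega)).1
          have h2 : m.1.1 i ≠ i := hlt i hik
          have h3 := hmono i (k : ℕ) (by omega) k.isLt
          rw [hk] at h3
          simp only [if_pos hik]
          omega
        · intro i hik
          simp [Nat.not_lt.mpr hik]⟩,
     ⟨fwd2 (k : ℕ) n m.1.1, by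
        obtain ⟨hmono, hrange, hjunk⟩ := m.1.2
        have hkn : (k : ℕ) ≤ n := by have := k.isLt; omega
        unfold fwd2
        refine ⟨?_, ?_, ?_⟩
        · intro i j hij hjk
          have h1 := hmono ((k:ℕ)+1+i) ((k:ℕ)+1+j) (by omega) (by omega)
          simp only [if_pos hjk, if_pos (lt_of_le_of_lt hij hjk)]
          omega
        · intro j hj
          have h1 := hrange ((k:ℕ)+1+j) (by omega)
          simp only [if_pos hj]
          omega
        · intro j hj
          simp [Nat.not_lt.mpr hj]⟩)
  invFun fg :=
    ⟨⟨bwd (k : ℕ) n fg.1.1 fg.2.1, by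
      obtain ⟨hfmono, hfrange, hfjunk⟩ := fg.1.2
      obtain ⟨hgmono, hgrange, hgjunk⟩ := fg.2.2
      have hkn : (k : ℕ) ≤ n := by have := k.isLt; omega
      unfold bwd
      refine ⟨?_, ?_, ?_⟩
      · intro i j hij hjn
        rcases lt_trichotomy j (k : ℕ) with hj | hj | hj
        · have hi : i < (k : ℕ) := lt_of_le_of_lt hij hj
          have := hfmono i j hij hj
          simp only [if_pos hi, if_pos hj]; omega
        · subst hj
          rw [if_neg (lt_irrefl ((k:ℕ))), if_pos rfl]
          rcases lt_or_eq_of_le hij with hi | hi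
          · have := (hfrange i hi).2
            rw [if_pos hi]; omega
          · subst hi
            rw [if_neg (lt_irrefl ((k:ℕ))), if_pos rfl]
        · have hj2 : ¬ j < (k:ℕ) := by omega
          have hj3 : ¬ j = (k:ℕ) := by omega
          simp only [if_neg hj2, if_neg hj3, if_pos (by omega : j ≤ n)]
          rcases lt_trichotomy i (k : ℕ) with hi | hi | hi
          · have := (hfrange i hi).2
            simp only [if_pos hi]; omega
          · simp only [if_neg (by omega : ¬ i < (k:ℕ)), if_pos hi]; omega
          · have hi2 : ¬ i < (k:ℕ) := by omega
            have hi3 : ¬ i = (k:ℕ) := by omega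
            have := hgmono (i - ((k:ℕ)+1)) (j - ((k:ℕ)+1)) (by omega) (by omega)
            simp only [if_neg hi2, if_neg hi3, if_pos (by omega : i ≤ n)]
            omega
      · intro i hi
        rcases lt_trichotomy i (k : ℕ) with h | h | h
        · have := hfrange i h
          simp only [if_pos h]; omega
        · simp only [if_neg (by omega : ¬ i < (k:ℕ)), if_pos h]; omega
        · have h2 : ¬ i < (k:ℕ) := by omega
          have h3 : ¬ i = (k:ℕ) := by omega
          have := hgrange (i - ((k:ℕ)+1)) (by omega)
          simp only [if_neg h2, if_neg h3, if_pos (by omega : i ≤ n)]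
          omega
      · intro i hi
        have h2 : ¬ i < (k:ℕ) := by omega
        have h3 : ¬ i = (k:ℕ) := by omega
        simp only [if_neg h2, if_neg h3, if_neg (by omega : ¬ i ≤ n)]⟩, by
      apply (ffix_eq_iff _ k).mpr
      obtain ⟨hfmono, hfrange, hfjunk⟩ := fg.1.2
      constructor
      · show bwd (k:ℕ) n fg.1.1 fg.2.1 (k:ℕ) = (k:ℕ)
        unfold bwd
        simp
      · intro i hik
        show bwd (k:ℕ) n fg.1.1 fg.2.1 i ≠ i
        have := (hfrange i hik).1
        unfold bwd
        simp only [if_pos hik]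
        omega⟩
  left_inv := by
    rintro ⟨⟨m, hmem⟩, hff⟩
    obtain ⟨hk, hlt⟩ := (ffix_eq_iff _ k).mp hff
    obtain ⟨hmono, hrange, hjunk⟩ := hmem
    have hkn : (k : ℕ) ≤ n := by have := k.isLt; omega
    apply Subtype.ext; apply Subtype.ext
    funext i
    show bwd (k:ℕ) n (fwd1 (k:ℕ) m) (fwd2 (k:ℕ) n m) i = m i
    unfold bwd fwd1 fwd2
    rcases lt_trichotomy i (k : ℕ) with h | h | h
    · have h1 := (hrange i (by omega)).1
      have h2 : m i ≠ i := hlt i h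
      rw [if_pos h, if_pos h]
      omega
    · subst h
      rw [if_neg (lt_irrefl ((k:ℕ))), if_pos rfl]
      exact hk.symm
    · have h2 : ¬ i < (k:ℕ) := by omega
      have h3 : ¬ i = (k:ℕ) := by omega
      by_cases h4 : i ≤ n
      · have h5 := (hrange i (by omega)).1
        simp only [if_neg h2, if_neg h3, if_pos h4,
          if_pos (by omega : i - ((k:ℕ)+1) < n - (k:ℕ))]
        have he : (k:ℕ) + 1 + (i - ((k:ℕ)+1)) = i := by omega
        rw [he]
        omega
      · simp only [if_neg h2, if_neg h3, if_neg h4]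
        exact (hjunk i (by omega)).symm
  right_inv := by
    rintro ⟨⟨f, hfmem⟩, ⟨g, hgmem⟩⟩
    obtain ⟨hfmono, hfrange, hfjunk⟩ := hfmem
    obtain ⟨hgmono, hgrange, hgjunk⟩ := hgmem
    have hkn : (k : ℕ) ≤ n := by have := k.isLt; omega
    refine Prod.ext (Subtype.ext (funext fun i => ?_)) (Subtype.ext (funext fun i => ?_))
    · show fwd1 (k:ℕ) (bwd (k:ℕ) n f g) i = f i
      unfold fwd1 bwd
      by_cases h : i < (k : ℕ)
      · simp only [if_pos h]
        omega
      · simp only [if_neg h]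
        exact (hfjunk i (by omega)).symm
    · show fwd2 (k:ℕ) n (bwd (k:ℕ) n f g) i = g i
      unfold fwd2 bwd
      by_cases h : i < n - (k : ℕ)
      · have h2 : ¬ ((k:ℕ) + 1 + i < (k:ℕ)) := by omega
        have h3 : ¬ ((k:ℕ) + 1 + i = (k:ℕ)) := by omega
        simp only [if_pos h, if_neg h2, if_neg h3, if_pos (by omega : (k:ℕ)+1+i ≤ n)]
        have he : (k:ℕ) + 1 + i - ((k:ℕ)+1) = i := by omega
        rw [he]
        omega
      · simp only [if_neg h]
        exact (hgjunk i (by omega)).symm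

end FF

lemma natCard_sigma {N : ℕ} (f : Fin N → Type*) [∀ i, Finite (f i)] :
    Nat.card (Σ i, f i) = ∑ i, Nat.card (f i) := by
  have : ∀ i, Fintype (f i) := fun i => Fintype.ofFinite _
  simp [Nat.card_eq_fintype_card]

lemma stair_card : ∀ n, Nat.card (Stair n) = catalan n := by
  intro n
  induction n using Nat.strong_induction_on with
  | _ n ih =>
    match n with
    | 0 => simpa using stair_zero_card
    | (n+1) =>
      have e1 : Stair (n+1) ≃ (Σ k : Fin (n+1), {m : Stair (n+1) // ffix m = k}) :=
        (Equiv.sigmaFiberEquiv ffix).symm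
      rw [Nat.card_congr e1, natCard_sigma, catalan_succ]
      apply Finset.sum_congr rfl
      intro k _
      rw [Nat.card_congr (fibEquiv k), Nat.card_prod, ih k (by have := k.isLt; omega),
        ih (n - (k:ℕ)) (by omega)]

section Pmax
variable {n : ℕ}

/-- prefix maximum -/
def pmax (σ : Equiv.Perm (Fin n)) (i : Fin n) : Fin n :=
  ((Finset.Iic i).image σ).max' ⟨σ i, Finset.mem_image_of_mem σ (Finset.mem_Iic.mpr le_rfl)⟩

lemma le_pmax (σ : Equiv.Perm (Fin n)) {j i : Fin n} (h : j ≤ i) : σ j ≤ pmax σ i :=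
  Finset.le_max' _ _ (Finset.mem_image_of_mem σ (Finset.mem_Iic.mpr h))

lemma pmax_mem (σ : Equiv.Perm (Fin n)) (i : Fin n) : ∃ j, j ≤ i ∧ σ j = pmax σ i := by
  have := Finset.max'_mem ((Finset.Iic i).image σ)
    ⟨σ i, Finset.mem_image_of_mem σ (Finset.mem_Iic.mpr le_rfl)⟩
  rw [Finset.mem_image] at this
  obtain ⟨j, hj, hje⟩ := this
  exact ⟨j, Finset.mem_Iic.mp hj, hje⟩

lemma pmax_mono (σ : Equiv.Perm (Fin n)) : Monotone (pmax σ) := by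
  intro i j hij
  apply Finset.max'_le
  intro y hy
  rw [Finset.mem_image] at hy
  obtain ⟨a, ha, rfl⟩ := hy
  exact le_pmax σ ((Finset.mem_Iic.mp ha).trans hij)

lemma self_le_pmax (σ : Equiv.Perm (Fin n)) (i : Fin n) : (i : ℕ) ≤ (pmax σ i : ℕ) := by
  have hsub : (Finset.Iic i).image σ ⊆ Finset.Iic (pmax σ i) := by
    intro y hy
    rw [Finset.mem_image] at hy
    obtain ⟨a, ha, rfl⟩ := hy
    exact Finset.mem_Iic.mpr (le_pmax σ (Finset.mem_Iic.mp ha))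
  have h1 := Finset.card_le_card hsub
  rw [Finset.card_image_of_injective _ σ.injective, Fin.card_Iic, Fin.card_Iic] at h1
  omega

/-- A 321-avoiding permutation takes the least unused value at every non-max position. -/
lemma least_unused (σ : Equiv.Perm (Fin n)) (hA : Avoids321 σ) (i : Fin n)
    (h : σ i < pmax σ i) :
    ∀ v : Fin n, (∀ j, j < i → σ j ≠ v) → σ i ≤ v := by
  intro v hv
  by_contra hc
  push_neg at hc
  -- v < σ i, v unused before i
  have hpi : σ.symm v ≠ i := by
    intro he
    rw [← he, Equiv.apply_symm_apply] at hc
    exact lt_irrefl _ hc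
  have hpgt : i < σ.symm v := by
    rcases lt_trichotomy (σ.symm v) i with hl | he | hg
    · exact absurd (Equiv.apply_symm_apply σ v) (hv _ hl)
    · exact absurd he hpi
    · exact hg
  obtain ⟨q, hqi, hq⟩ := pmax_mem σ i
  have hqne : q ≠ i := by
    intro he; rw [he] at hq; rw [hq] at h; exact lt_irrefl _ h
  have hqlt : q < i := lt_of_le_of_ne hqi hqne
  exact hA ⟨q, i, σ.symm v, hqlt, hpgt, by rw [Equiv.apply_symm_apply]; exact hc,
    hq ▸ h⟩

lemma avoids321_inj {σ τ : Equiv.Perm (Fin n)} (hσ : Avoids321 σ) (hτ : Avoids321 τ)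
    (hm : pmax σ = pmax τ) : σ = τ := by
  have main : ∀ N : ℕ, ∀ i : Fin n, (i : ℕ) < N → σ i = τ i := by
    intro N
    induction N with
    | zero => intro i hi; omega
    | succ N ih =>
      intro i hi
      have IHj : ∀ j : Fin n, j < i → σ j = τ j := by
        intro j hj
        exact ih j (by rw [Fin.lt_def] at hj; omega)
      have hpm : pmax σ i = pmax τ i := congrFun hm i
      rcases eq_or_lt_of_le (le_pmax σ (le_refl i)) with h1 | h1 <;>
        rcases eq_or_lt_of_le (le_pmax τ (le_refl i)) with h2 | h2
      · rw [h1, h2, hpm]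
      · -- σ i is the max, τ i is not
        exfalso
        obtain ⟨q, hqi, hq⟩ := pmax_mem τ i
        have hqne : q ≠ i := by
          intro he; rw [he] at hq; rw [hq] at h2; exact lt_irrefl _ h2
        have hql : q < i := lt_of_le_of_ne hqi hqne
        have : σ q = σ i := by rw [IHj q hql, hq, ← hpm, h1]
        exact hqne (σ.injective this)
      · exfalso
        obtain ⟨q, hqi, hq⟩ := pmax_mem σ i
        have hqne : q ≠ i := by
          intro he; rw [he] at hq; rw [hq] at h1; exact lt_irrefl _ h1
        have hql : q < i := lt_of_le_of_ne hqi hqne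
        have : τ q = τ i := by rw [← IHj q hql, hq, hpm, h2]
        exact hqne (τ.injective this)
      · -- both less than the max: least unused values coincide
        have himg : ∀ v : Fin n, (∀ j, j < i → σ j ≠ v) ↔ (∀ j, j < i → τ j ≠ v) := by
          intro v
          constructor <;> intro hall j hj
          · rw [← IHj j hj]; exact hall j hj
          · rw [IHj j hj]; exact hall j hj
        have hus : ∀ j, j < i → σ j ≠ σ i := fun j hj he => (ne_of_lt hj) (σ.injective he)
        have hut : ∀ j, j < i → τ j ≠ τ i := fun j hj he => (ne_of_lt hj) (τ.injective he)
        have l1 := least_unused σ hσ i h1 (τ i) ((himg (τ i)).mpr hut)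
        have l2 := least_unused τ hτ i h2 (σ i) ((himg (σ i)).mp hus)
        exact le_antisymm l1 l2
  apply Equiv.ext
  intro i
  exact main n i i.isLt

end Pmax

section Claims
variable {α : Type*} [LinearOrder α]

/-- If an order iso enumerates `s` and more than `t` elements of `s` are below `x`,
then the `t`-th element is below `x`. -/
lemma iso_lt_of_card_lt {s : Finset α} {c : ℕ} (iso : Fin c ≃o {x // x ∈ s})
    (t : Fin c) (x : α) (h : (t : ℕ) < (s.filter (· < x)).card) : (iso t : α) < x := by
  by_contra hc
  push_neg at hc  -- x ≤ iso t
  classical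
  have hle : (s.filter (· < x)).card ≤ (Finset.range (t : ℕ)).card := by
    apply Finset.card_le_card_of_injOn
      (fun w => if h : w ∈ s then ((iso.symm ⟨w, h⟩ : Fin c) : ℕ) else 0)
    · intro w hw
      rw [Finset.mem_coe, Finset.mem_filter] at hw
      obtain ⟨hws, hwx⟩ := hw
      simp only [Finset.mem_coe]; rw [dif_pos hws, Finset.mem_range]
      have h1 : (⟨w, hws⟩ : {x // x ∈ s}) < iso t := by
        rw [Subtype.mk_lt_mk]
        exact lt_of_lt_of_le hwx hc
      have h2 : iso.symm ⟨w, hws⟩ < iso.symm (iso t) := iso.symm.strictMono h1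
      rw [iso.symm_apply_apply] at h2
      exact h2
    · intro w1 hw1 w2 hw2 he
      rw [Finset.mem_coe, Finset.mem_filter] at hw1 hw2
      simp only [] at he
      rw [dif_pos hw1.1, dif_pos hw2.1] at he
      have := iso.symm.injective (Fin.ext he)
      exact Subtype.mk_eq_mk.mp this
  rw [Finset.card_range] at hle
  omega

/-- The index of an element in the enumeration is at most the number of smaller elements. -/
lemma card_lt_of_iso {s : Finset α} {c : ℕ} (iso : Fin c ≃o {x // x ∈ s})
    (t : Fin c) : (t : ℕ) ≤ (s.filter (· < (iso t : α))).card := by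
  classical
  have hle : (Finset.range (t : ℕ)).card ≤ (s.filter (· < (iso t : α))).card := by
    apply Finset.card_le_card_of_injOn
      (fun u => if h : u < c then (iso ⟨u, h⟩ : α) else (iso t : α))
    · intro u hu
      rw [Finset.mem_coe, Finset.mem_range] at hu
      have huc : u < c := lt_trans hu t.isLt
      simp only [Finset.mem_coe]; rw [dif_pos huc, Finset.mem_filter]
      refine ⟨(iso ⟨u, huc⟩).2, ?_⟩
      have : (⟨u, huc⟩ : Fin c) < t := hu
      exact Subtype.coe_lt_coe.mpr (iso.strictMono this)
    · intro u1 hu1 u2 hu2 he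
      rw [Finset.mem_coe, Finset.mem_range] at hu1 hu2
      simp only [] at he
      rw [dif_pos (lt_trans hu1 t.isLt), dif_pos (lt_trans hu2 t.isLt)] at he
      have := iso.injective (Subtype.ext he)
      exact congrArg Fin.val this
  rw [Finset.card_range] at hle
  exact hle

end Claims

section Build
variable {n : ℕ}

open scoped Classical in
/-- Record positions of a monotone sequence. -/
noncomputable def recSet (M : Fin n → Fin n) : Finset (Fin n) :=
  Finset.univ.filter (fun i => ∀ j, j < i → M j < M i)

lemma recSet_injOn (M : Fin n → Fin n) : Set.InjOn M (recSet M) := by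
  intro a ha b hb he
  rw [Finset.mem_coe, recSet, Finset.mem_filter] at ha hb
  rcases lt_trichotomy a b with h | h | h
  · exact absurd he (ne_of_lt (hb.2 a h))
  · exact h
  · exact absurd he.symm (ne_of_lt (ha.2 b h))

lemma rec_exists (M : Fin n → Fin n) (hmono : Monotone M) (i : Fin n) :
    ∃ r, r ∈ recSet M ∧ r ≤ i ∧ M r = M i := by
  classical
  set T := Finset.univ.filter (fun j : Fin n => j ≤ i ∧ M j = M i) with hT
  have hne : T.Nonempty := ⟨i, by simp [hT]⟩
  set r := T.min' hne with hr
  have hrT : r ∈ T := Finset.min'_mem _ _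
  rw [hT, Finset.mem_filter] at hrT
  refine ⟨r, ?_, hrT.2.1, hrT.2.2⟩
  rw [recSet, Finset.mem_filter]
  refine ⟨Finset.mem_univ r, fun j hj => ?_⟩
  have hle : M j ≤ M i := hmono (le_trans (le_of_lt hj) hrT.2.1)
  rcases lt_or_eq_of_le hle with h | h
  · rw [← hrT.2.2] at h; exact h
  · exfalso
    have hjT : j ∈ T := by
      rw [hT, Finset.mem_filter]
      exact ⟨Finset.mem_univ j, le_trans (le_of_lt hj) hrT.2.1, h⟩
    exact absurd (Finset.min'_le T j hjT) (not_le.mpr hj)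

lemma vc_card (M : Fin n → Fin n) :
    (((recSet M).image M)ᶜ).card = ((recSet M)ᶜ).card := by
  classical
  rw [Finset.card_compl, Finset.card_compl,
    Finset.card_image_of_injOn (recSet_injOn M)]

/-- The canonical 321-avoiding sequence with prefix maxima `M`. -/
noncomputable def bld (M : Fin n → Fin n) : Fin n → Fin n := fun i =>
  if h : i ∈ recSet M then M i
  else (Finset.orderIsoOfFin (((recSet M).image M)ᶜ) (vc_card M)
    ((Finset.orderIsoOfFin ((recSet M)ᶜ) rfl).symm
      ⟨i, Finset.mem_compl.mpr h⟩) : Fin n)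

lemma bld_rec {M : Fin n → Fin n} {i : Fin n} (h : i ∈ recSet M) : bld M i = M i :=
  dif_pos h

lemma bld_nonrec_mem {M : Fin n → Fin n} {i : Fin n} (h : i ∉ recSet M) :
    bld M i ∉ (recSet M).image M := by
  simp only [bld]
  rw [dif_neg h]
  have := (Finset.orderIsoOfFin (((recSet M).image M)ᶜ) (vc_card M)
    ((Finset.orderIsoOfFin ((recSet M)ᶜ) rfl).symm ⟨i, Finset.mem_compl.mpr h⟩)).2
  exact Finset.mem_compl.mp this

lemma bld_nonrec_mono {M : Fin n → Fin n} {i j : Fin n} (hi : i ∉ recSet M)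
    (hj : j ∉ recSet M) (hij : i < j) : bld M i < bld M j := by
  simp only [bld]
  rw [dif_neg hi, dif_neg hj]
  have h1 : (⟨i, Finset.mem_compl.mpr hi⟩ : {x // x ∈ (recSet M)ᶜ}) <
      ⟨j, Finset.mem_compl.mpr hj⟩ := Subtype.mk_lt_mk.mpr hij
  have h2 := (Finset.orderIsoOfFin ((recSet M)ᶜ) rfl).symm.strictMono h1
  have h3 := (Finset.orderIsoOfFin (((recSet M).image M)ᶜ) (vc_card M)).strictMono h2
  exact Subtype.coe_lt_coe.mpr h3

lemma bld_nonrec_lt {M : Fin n → Fin n} (hmono : Monotone M)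
    (hge : ∀ i : Fin n, (i : ℕ) ≤ (M i : ℕ)) {i : Fin n} (hi : i ∉ recSet M) :
    bld M i < M i := by
  classical
  simp only [bld]
  rw [dif_neg hi]
  set t := (Finset.orderIsoOfFin ((recSet M)ᶜ) rfl).symm ⟨i, Finset.mem_compl.mpr hi⟩ with ht
  apply iso_lt_of_card_lt
  -- counting
  have hstep1 : (t : ℕ) ≤ (((recSet M)ᶜ).filter (· < i)).card := by
    have := card_lt_of_iso (Finset.orderIsoOfFin ((recSet M)ᶜ) rfl) t
    rw [ht, OrderIso.apply_symm_apply] at this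
    exact this
  -- partition of Iio i
  have hpart : (((recSet M)ᶜ).filter (· < i)).card + ((recSet M).filter (· < i)).card
      = (i : ℕ) := by
    have h1 : ((recSet M)ᶜ).filter (· < i) = (Finset.Iio i).filter (· ∉ recSet M) := by
      ext a; simp [Finset.mem_filter, and_comm]
    have h2 : (recSet M).filter (· < i) = (Finset.Iio i).filter (· ∈ recSet M) := by
      ext a; simp [Finset.mem_filter, and_comm]
    rw [h1, h2, Nat.add_comm, Finset.card_filter_add_card_filter_not, Fin.card_Iio]
  -- B bound
  obtain ⟨r0, hr0R, hr0le, hr0e⟩ := rec_exists M hmono i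
  have hr0lt : r0 < i := lt_of_le_of_ne hr0le (fun he => hi (he ▸ hr0R))
  have hBsub : ((recSet M).image M).filter (· < M i) ⊆
      (((recSet M).filter (· < i)).image M).erase (M i) := by
    intro v hv
    rw [Finset.mem_filter, Finset.mem_image] at hv
    obtain ⟨⟨r, hrR, hre⟩, hvlt⟩ := hv
    rw [Finset.mem_erase]
    constructor
    · rw [← hre]; rw [← hre] at hvlt; exact ne_of_lt hvlt
    · rw [Finset.mem_image]
      refine ⟨r, ?_, hre⟩
      rw [Finset.mem_filter]
      refine ⟨hrR, ?_⟩
      by_contra hc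
      push_neg at hc
      have := hmono hc
      rw [hre] at this
      exact absurd hvlt (not_lt.mpr this)
  have hMiMem : M i ∈ ((recSet M).filter (· < i)).image M := by
    rw [Finset.mem_image]
    exact ⟨r0, Finset.mem_filter.mpr ⟨hr0R, hr0lt⟩, hr0e⟩
  have hB : (((recSet M).image M).filter (· < M i)).card + 1 ≤
      ((recSet M).filter (· < i)).card := by
    have h1 := Finset.card_le_card hBsub
    rw [Finset.card_erase_of_mem hMiMem] at h1
    have h2 := Finset.card_image_le (s := (recSet M).filter (· < i)) (f := M)
    have h3 : 1 ≤ (((recSet M).filter (· < i)).image M).card :=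
      Finset.card_pos.mpr ⟨M i, hMiMem⟩
    omega
  -- C identity
  have hC : ((((recSet M).image M)ᶜ).filter (· < M i)).card +
      (((recSet M).image M).filter (· < M i)).card = ((M i : ℕ)) := by
    have h1 : (((recSet M).image M)ᶜ).filter (· < M i)
        = (Finset.Iio (M i)).filter (· ∉ (recSet M).image M) := by
      ext a; simp [Finset.mem_filter, and_comm]
    have h2 : ((recSet M).image M).filter (· < M i)
        = (Finset.Iio (M i)).filter (· ∈ (recSet M).image M) := by
      ext a; simp [Finset.mem_filter, and_comm]
    rw [h1, h2, Nat.add_comm, Finset.card_filter_add_card_filter_not, Fin.card_Iio]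
  have hgei := hge i
  omega

lemma bld_le {M : Fin n → Fin n} (hmono : Monotone M)
    (hge : ∀ i : Fin n, (i : ℕ) ≤ (M i : ℕ)) (i : Fin n) : bld M i ≤ M i := by
  by_cases h : i ∈ recSet M
  · rw [bld_rec h]
  · exact le_of_lt (bld_nonrec_lt hmono hge h)

lemma bld_bijective (M : Fin n → Fin n) : Function.Bijective (bld M) := by
  rw [← Finite.injective_iff_bijective]
  intro i j he
  by_cases hi : i ∈ recSet M <;> by_cases hj : j ∈ recSet M
  · rw [bld_rec hi, bld_rec hj] at he
    exact recSet_injOn M hi hj he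
  · exfalso
    rw [bld_rec hi] at he
    exact bld_nonrec_mem hj (he ▸ Finset.mem_image_of_mem M hi)
  · exfalso
    rw [bld_rec hj] at he
    exact bld_nonrec_mem hi (he.symm ▸ Finset.mem_image_of_mem M hj)
  · by_contra hne
    rcases lt_or_gt_of_ne hne with h | h
    · exact absurd he (ne_of_lt (bld_nonrec_mono hi hj h))
    · exact absurd he.symm (ne_of_lt (bld_nonrec_mono hj hi h))

lemma build_exists (M : Fin n → Fin n) (hmono : Monotone M)
    (hge : ∀ i : Fin n, (i : ℕ) ≤ (M i : ℕ)) :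
    ∃ σ : Equiv.Perm (Fin n), Avoids321 σ ∧ pmax σ = M := by
  refine ⟨Equiv.ofBijective (bld M) (bld_bijective M), ?_, ?_⟩
  · rintro ⟨i, j, k, hij, hjk, h1, h2⟩
    simp only [Equiv.ofBijective_apply] at h1 h2
    have hjR : j ∉ recSet M := by
      intro hc
      have : bld M i ≤ M j := le_trans (bld_le hmono hge i) (hmono (le_of_lt hij))
      rw [← bld_rec hc] at this
      exact absurd h2 (not_lt.mpr this)
    have hkR : k ∉ recSet M := by
      intro hc
      have : bld M j ≤ M k := le_trans (bld_le hmono hge j) (hmono (le_of_lt hjk))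
      rw [← bld_rec hc] at this
      exact absurd h1 (not_lt.mpr this)
    exact absurd h1 (not_lt.mpr (le_of_lt (bld_nonrec_mono hjR hkR hjk)))
  · funext i
    apply le_antisymm
    · apply Finset.max'_le
      intro y hy
      rw [Finset.mem_image] at hy
      obtain ⟨a, ha, rfl⟩ := hy
      exact le_trans (bld_le hmono hge a) (hmono (Finset.mem_Iic.mp ha))
    · obtain ⟨r, hrR, hrle, hre⟩ := rec_exists M hmono i
      have : (Equiv.ofBijective (bld M) (bld_bijective M)) r = M i := by
        simp only [Equiv.ofBijective_apply]
        rw [bld_rec hrR, hre]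
      exact this ▸ le_pmax _ hrle

end Build


section Glue
variable {n : ℕ}

lemma avoids321_card (n : ℕ) :
    Nat.card {σ : Equiv.Perm (Fin n) // Avoids321 σ} = Nat.card (Stair n) := by
  apply Nat.card_eq_of_bijective
    (f := fun s : {σ : Equiv.Perm (Fin n) // Avoids321 σ} =>
      (⟨fun i => if h : i < n then ((pmax s.1 ⟨i, h⟩ : Fin n) : ℕ) else 0, by
        refine ⟨?_, ?_, ?_⟩
        · intro i j hij hjn
          simp only [dif_pos hjn, dif_pos (lt_of_le_of_lt hij hjn)]
          exact pmax_mono s.1 (show (⟨i, lt_of_le_of_lt hij hjn⟩ : Fin n) ≤ ⟨j, hjn⟩ from hij)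
        · intro i hin
          simp only [dif_pos hin]
          exact ⟨self_le_pmax s.1 ⟨i, hin⟩, (pmax s.1 ⟨i, hin⟩).isLt⟩
        · intro i hin
          simp only [dif_neg (not_lt.mpr hin)]⟩ : Stair n))
  constructor
  · rintro ⟨σ, hσ⟩ ⟨τ, hτ⟩ he
    have he2 : pmax σ = pmax τ := by
      funext i
      have := congrFun (congrArg Subtype.val he) (i : ℕ)
      simp only [dif_pos i.isLt] at this
      apply Fin.ext
      simpa using this
    exact Subtype.ext (avoids321_inj hσ hτ he2)
  · intro m
    set M : Fin n → Fin n := fun i => ⟨m.1 i, (m.2.2.1 i i.2).2⟩ with hM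
    have hmono : Monotone M := by
      intro i j hij
      rw [Fin.le_def]
      exact m.2.1 i j hij j.2
    have hge : ∀ i : Fin n, (i : ℕ) ≤ (M i : ℕ) := fun i => (m.2.2.1 i i.2).1
    obtain ⟨σ, hA, hpm⟩ := build_exists M hmono hge
    refine ⟨⟨σ, hA⟩, ?_⟩
    apply Subtype.ext
    funext i
    by_cases h : i < n
    · show (if h : i < n then ((pmax σ ⟨i, h⟩ : Fin n) : ℕ) else 0) = m.1 i
      rw [dif_pos h, hpm]
    · show (if h : i < n then ((pmax σ ⟨i, h⟩ : Fin n) : ℕ) else 0) = m.1 i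
      rw [dif_neg h, m.2.2.2 i (le_of_not_gt h)]

lemma simsun_of_avoids321 {σ : Equiv.Perm (Fin n)} (h : Avoids321 σ) : Simsun σ := by
  rintro k ⟨i, j, l, h1, h2, _, _, _, h6, h7, _⟩
  exact h ⟨i, j, l, h1, h2, h6, h7⟩

lemma avoids321_inv {σ : Equiv.Perm (Fin n)} (h : Avoids321 σ) : Avoids321 σ⁻¹ := by
  rintro ⟨i, j, k, hij, hjk, h1, h2⟩
  refine h ⟨σ⁻¹ k, σ⁻¹ j, σ⁻¹ i, h1, h2, ?_, ?_⟩
  · simpa using hij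
  · simpa using hjk

end Glue

/-- Every 321-avoiding simsun permutation is double simsun, and the number of
321-avoiding double simsun permutations in `S_n` is the Catalan number `C_n`. -/
theorem avoid321_doubleSimsun_catalan (n : ℕ) :
    (∀ σ : Equiv.Perm (Fin n), Avoids321 σ → Simsun σ → DoubleSimsun σ) ∧
    Nat.card {σ : Equiv.Perm (Fin n) // Avoids321 σ ∧ DoubleSimsun σ} = catalan n := by
  constructor
  · intro σ hA _
    exact ⟨simsun_of_avoids321 hA, simsun_of_avoids321 (avoids321_inv hA)⟩
  · rw [Nat.card_congr (Equiv.subtypeEquivRight (fun σ => ?_)), avoids321_card, stair_card]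
    exact ⟨fun h => h.1, fun h =>
      ⟨h, simsun_of_avoids321 h, simsun_of_avoids321 (avoids321_inv h)⟩⟩
end
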